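/- Let 𝔤 be a Lie algebra over K, let A₀, A₁, Y ∈ 𝔤 and α, β ∈ K satisfy relations (R1)–(R6), and assume (α+β)(6α+β)(16α+β) ≠ 0. Then the Lie subalgebra of 𝔤 generated by {A₀, A₁, Y} equals the K-linear span of the six elements A₀, A₁, Y, [A₀,A₁], [A₀,[A₀,A₁]], [A₁,[A₀,A₁]]; in particular, this subalgebra has dimension at most 6. -/

import Mathlib

theorem stmt_18 {K : Type*} [Field K] [CharZero K]
    {𝔤 : Type*} [LieRing 𝔤] [LieAlgebra K 𝔤] (α β : K) (A₀ A₁ Y : 𝔤)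
    (hR1 : ⁅A₁, ⁅A₁, ⁅A₀, A₁⁆⁆⁆ = 0)
    (hR2 : (4 * α) • ⁅A₀, A₁⁆ + ⁅A₀, ⁅A₁, ⁅A₀, A₁⁆⁆⁆ = 0)
    (hR3 : ⁅A₁, ⁅A₁, ⁅A₀, ⁅A₀, ⁅A₀, A₁⁆⁆⁆⁆⁆ = 0)
    (hR4 : ⁅A₁, ⁅A₀, ⁅A₀, ⁅A₀, ⁅A₀, A₁⁆⁆⁆⁆⁆ - β • ⁅A₀, ⁅A₀, ⁅A₀, A₁⁆⁆⁆
        + ((1 : K) / 2) • ⁅A₀, ⁅A₁, ⁅A₀, ⁅A₀, ⁅A₀, A₁⁆⁆⁆⁆⁆ = 0)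
    (hR5 : ⁅A₁, Y⁆ + ⁅A₀, ⁅A₀, ⁅A₀, ⁅A₀, ⁅A₀, A₁⁆⁆⁆⁆⁆ = 0)
    (hR6 : ⁅A₀, Y⁆ = 0)
    (hne : (α + β) * (6 * α + β) * (16 * α + β) ≠ 0) :
    (LieSubalgebra.lieSpan K 𝔤 {A₀, A₁, Y}).toSubmodule
      = Submodule.span K
          {A₀, A₁, Y, ⁅A₀, A₁⁆, ⁅A₀, ⁅A₀, A₁⁆⁆, ⁅A₁, ⁅A₀, A₁⁆⁆} ∧
    Module.rank K (LieSubalgebra.lieSpan K 𝔤 {A₀, A₁, Y}) ≤ 6 := by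
  have hαβ : (α + β) ≠ 0 := fun h => hne (by rw [h, zero_mul, zero_mul])
  have h6 : (6*α + β) ≠ 0 := fun h => hne (by rw [h, mul_zero, zero_mul])
  have h16 : (16*α + β) ≠ 0 := fun h => hne (by rw [h, mul_zero])
  have s17c : ⁅A₀, ⁅A₁, ⁅A₀, A₁⁆⁆⁆ = (-(4*α)) • ⁅A₀, A₁⁆ := by
    linear_combination (norm := module) hR2
  have s1 : ⁅A₁, ⁅A₀, ⁅A₀, A₁⁆⁆⁆ = (-(4*α)) • ⁅A₀, A₁⁆ := by
    linear_combination (norm := module) hR2 - leibniz_lie A₀ A₁ ⁅A₀, A₁⁆ - lie_self ⁅A₀, A₁⁆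
  have s2a : ⁅A₀, ⁅A₁, ⁅A₀, ⁅A₀, A₁⁆⁆⁆⁆ = (-(4*α)) • ⁅A₀, ⁅A₀, A₁⁆⁆ := by rw [s1, lie_smul]
  have s2 : ⁅⁅A₀, A₁⁆, ⁅A₀, ⁅A₀, A₁⁆⁆⁆ = -⁅A₁, ⁅A₀, ⁅A₀, ⁅A₀, A₁⁆⁆⁆⁆ - (4*α) • ⁅A₀, ⁅A₀, A₁⁆⁆ := by
    linear_combination (norm := module) s2a - leibniz_lie A₀ A₁ ⁅A₀, ⁅A₀, A₁⁆⁆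
  have s3a : ⁅A₀, ⁅⁅A₀, A₁⁆, ⁅A₀, ⁅A₀, A₁⁆⁆⁆⁆ = -⁅A₀, ⁅A₁, ⁅A₀, ⁅A₀, ⁅A₀, A₁⁆⁆⁆⁆⁆ - (4*α) • ⁅A₀, ⁅A₀, ⁅A₀, A₁⁆⁆⁆ := by
    rw [s2, lie_sub, lie_neg, lie_smul]
  have s3 : ⁅⁅A₀, A₁⁆, ⁅A₀, ⁅A₀, ⁅A₀, A₁⁆⁆⁆⁆ = -⁅A₀, ⁅A₁, ⁅A₀, ⁅A₀, ⁅A₀, A₁⁆⁆⁆⁆⁆ - (4*α) • ⁅A₀, ⁅A₀, ⁅A₀, A₁⁆⁆⁆ := by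
    linear_combination (norm := module) s3a - leibniz_lie A₀ ⁅A₀, A₁⁆ ⁅A₀, ⁅A₀, A₁⁆⁆ - lie_self ⁅A₀, ⁅A₀, A₁⁆⁆
  have s4 : ⁅A₀, ⁅A₁, ⁅A₀, ⁅A₀, ⁅A₀, A₁⁆⁆⁆⁆⁆ = ((2/5 : K)*(β - 4*α)) • ⁅A₀, ⁅A₀, ⁅A₀, A₁⁆⁆⁆ := by
    linear_combination (norm := module)
      ((2/5 : K)) • (leibniz_lie A₀ A₁ ⁅A₀, ⁅A₀, ⁅A₀, A₁⁆⁆⁆ + s3 + hR4)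
  have s5 : ⁅⁅A₀, A₁⁆, ⁅A₀, ⁅A₀, ⁅A₀, A₁⁆⁆⁆⁆ = (-((2/5 : K)*(6*α + β))) • ⁅A₀, ⁅A₀, ⁅A₀, A₁⁆⁆⁆ := by
    linear_combination (norm := module) s3 - s4
  have s6 : ⁅A₁, ⁅A₀, ⁅A₀, ⁅A₀, ⁅A₀, A₁⁆⁆⁆⁆⁆ = ((4/5 : K)*(α + β)) • ⁅A₀, ⁅A₀, ⁅A₀, A₁⁆⁆⁆ := by
    linear_combination (norm := module) - leibniz_lie A₀ A₁ ⁅A₀, ⁅A₀, ⁅A₀, A₁⁆⁆⁆ + s4 - s5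
  have s8a : ⁅A₁, ⁅A₀, ⁅A₁, ⁅A₀, ⁅A₀, ⁅A₀, A₁⁆⁆⁆⁆⁆⁆ = ((2/5 : K)*(β - 4*α)) • ⁅A₁, ⁅A₀, ⁅A₀, ⁅A₀, A₁⁆⁆⁆⁆ := by rw [s4, lie_smul]
  have s8b : ⁅A₀, ⁅A₁, ⁅A₁, ⁅A₀, ⁅A₀, ⁅A₀, A₁⁆⁆⁆⁆⁆⁆ = 0 := by rw [hR3, lie_zero]
  have s8 : ⁅⁅A₀, A₁⁆, ⁅A₁, ⁅A₀, ⁅A₀, ⁅A₀, A₁⁆⁆⁆⁆⁆ = (-((2/5 : K)*(β - 4*α))) • ⁅A₁, ⁅A₀, ⁅A₀, ⁅A₀, A₁⁆⁆⁆⁆ := by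
    linear_combination (norm := module) s8b - leibniz_lie A₀ A₁ ⁅A₁, ⁅A₀, ⁅A₀, ⁅A₀, A₁⁆⁆⁆⁆ - s8a
  have s9a : ⁅A₁, ⁅⁅A₀, A₁⁆, ⁅A₀, ⁅A₀, ⁅A₀, A₁⁆⁆⁆⁆⁆ = (-((2/5 : K)*(6*α + β))) • ⁅A₁, ⁅A₀, ⁅A₀, ⁅A₀, A₁⁆⁆⁆⁆ := by rw [s5, lie_smul]
  have s9 : ⁅⁅A₁, ⁅A₀, A₁⁆⁆, ⁅A₀, ⁅A₀, ⁅A₀, A₁⁆⁆⁆⁆ = (-(4*α)) • ⁅A₁, ⁅A₀, ⁅A₀, ⁅A₀, A₁⁆⁆⁆⁆ := by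
    linear_combination (norm := module) s9a - leibniz_lie A₁ ⁅A₀, A₁⁆ ⁅A₀, ⁅A₀, ⁅A₀, A₁⁆⁆⁆ - s8
  have s10a : ⁅A₀, ⁅⁅A₀, A₁⁆, ⁅A₁, ⁅A₀, ⁅A₀, ⁅A₀, A₁⁆⁆⁆⁆⁆⁆ = ((-((2/5 : K)*(β - 4*α)))*((2/5 : K)*(β - 4*α))) • ⁅A₀, ⁅A₀, ⁅A₀, A₁⁆⁆⁆ := by rw [s8, lie_smul, s4, smul_smul]
  have s10b : ⁅⁅A₀, A₁⁆, ⁅A₀, ⁅A₁, ⁅A₀, ⁅A₀, ⁅A₀, A₁⁆⁆⁆⁆⁆⁆ = (((2/5 : K)*(β - 4*α))*(-((2/5 : K)*(6*α + β)))) • ⁅A₀, ⁅A₀, ⁅A₀, A₁⁆⁆⁆ := by rw [s4, lie_smul, s5, smul_smul]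
  have s10 : ⁅⁅A₀, ⁅A₀, A₁⁆⁆, ⁅A₁, ⁅A₀, ⁅A₀, ⁅A₀, A₁⁆⁆⁆⁆⁆ = (4*α*((2/5 : K)*(β - 4*α))) • ⁅A₀, ⁅A₀, ⁅A₀, A₁⁆⁆⁆ := by
    linear_combination (norm := module) s10a - leibniz_lie A₀ ⁅A₀, A₁⁆ ⁅A₁, ⁅A₀, ⁅A₀, ⁅A₀, A₁⁆⁆⁆⁆ - s10b
  have s12a : ⁅A₀, ⁅⁅A₀, A₁⁆, ⁅A₀, ⁅A₀, ⁅A₀, A₁⁆⁆⁆⁆⁆ = (-((2/5 : K)*(6*α + β))) • ⁅A₀, ⁅A₀, ⁅A₀, ⁅A₀, A₁⁆⁆⁆⁆ := by rw [s5, lie_smul]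
  have s12 : ⁅⁅A₀, ⁅A₀, A₁⁆⁆, ⁅A₀, ⁅A₀, ⁅A₀, A₁⁆⁆⁆⁆ = (-((2/5 : K)*(6*α + β))) • ⁅A₀, ⁅A₀, ⁅A₀, ⁅A₀, A₁⁆⁆⁆⁆ - ⁅⁅A₀, A₁⁆, ⁅A₀, ⁅A₀, ⁅A₀, ⁅A₀, A₁⁆⁆⁆⁆⁆ := by
    linear_combination (norm := module) s12a - leibniz_lie A₀ ⁅A₀, A₁⁆ ⁅A₀, ⁅A₀, ⁅A₀, A₁⁆⁆⁆
  have s11c : ⁅⁅A₁, ⁅A₀, ⁅A₀, ⁅A₀, A₁⁆⁆⁆⁆, ⁅A₀, ⁅A₀, A₁⁆⁆⁆ = (-(4*α*((2/5 : K)*(β - 4*α)))) • ⁅A₀, ⁅A₀, ⁅A₀, A₁⁆⁆⁆ := by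
    rw [← lie_skew ⁅A₁, ⁅A₀, ⁅A₀, ⁅A₀, A₁⁆⁆⁆⁆ ⁅A₀, ⁅A₀, A₁⁆⁆, s10]; module
  have s11d : ⁅A₀, ⁅⁅A₁, ⁅A₀, ⁅A₀, ⁅A₀, A₁⁆⁆⁆⁆, ⁅A₀, ⁅A₀, A₁⁆⁆⁆⁆ = (-(4*α*((2/5 : K)*(β - 4*α)))) • ⁅A₀, ⁅A₀, ⁅A₀, ⁅A₀, A₁⁆⁆⁆⁆ := by rw [s11c, lie_smul]
  have s11a : ⁅⁅A₀, ⁅A₁, ⁅A₀, ⁅A₀, ⁅A₀, A₁⁆⁆⁆⁆⁆, ⁅A₀, ⁅A₀, A₁⁆⁆⁆ = ((2/5 : K)*(β - 4*α)) • ⁅⁅A₀, ⁅A₀, ⁅A₀, A₁⁆⁆⁆, ⁅A₀, ⁅A₀, A₁⁆⁆⁆ := by rw [s4, smul_lie]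
  have s11 : ⁅⁅A₁, ⁅A₀, ⁅A₀, ⁅A₀, A₁⁆⁆⁆⁆, ⁅A₀, ⁅A₀, ⁅A₀, A₁⁆⁆⁆⁆ = (-(((2/5 : K)*(β - 4*α))*((2/5 : K)*(16*α + β)))) • ⁅A₀, ⁅A₀, ⁅A₀, ⁅A₀, A₁⁆⁆⁆⁆ + (-((2/5 : K)*(β - 4*α))) • ⁅⁅A₀, A₁⁆, ⁅A₀, ⁅A₀, ⁅A₀, ⁅A₀, A₁⁆⁆⁆⁆⁆ := by
    linear_combination (norm := module) (-1 : K) • (leibniz_lie A₀ ⁅A₁, ⁅A₀, ⁅A₀, ⁅A₀, A₁⁆⁆⁆⁆ ⁅A₀, ⁅A₀, A₁⁆⁆) + s11d - s11a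
      + ((2/5 : K)*(β - 4*α)) • (lie_skew ⁅A₀, ⁅A₀, A₁⁆⁆ ⁅A₀, ⁅A₀, ⁅A₀, A₁⁆⁆⁆) + ((2/5 : K)*(β - 4*α)) • s12
  have s13a : ⁅⁅A₀, ⁅A₀, A₁⁆⁆, ⁅⁅A₀, A₁⁆, ⁅A₀, ⁅A₀, ⁅A₀, A₁⁆⁆⁆⁆⁆ = (-((2/5 : K)*(6*α + β))) • ⁅⁅A₀, ⁅A₀, A₁⁆⁆, ⁅A₀, ⁅A₀, ⁅A₀, A₁⁆⁆⁆⁆ := by rw [s5, lie_smul]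
  have s13b : ⁅⁅A₀, ⁅A₀, A₁⁆⁆, ⁅A₀, A₁⁆⁆ = ⁅A₁, ⁅A₀, ⁅A₀, ⁅A₀, A₁⁆⁆⁆⁆ + (4*α) • ⁅A₀, ⁅A₀, A₁⁆⁆ := by
    rw [← lie_skew ⁅A₀, ⁅A₀, A₁⁆⁆ ⁅A₀, A₁⁆, s2]; module
  have s13c : ⁅⁅⁅A₀, ⁅A₀, A₁⁆⁆, ⁅A₀, A₁⁆⁆, ⁅A₀, ⁅A₀, ⁅A₀, A₁⁆⁆⁆⁆ = ⁅⁅A₁, ⁅A₀, ⁅A₀, ⁅A₀, A₁⁆⁆⁆⁆, ⁅A₀, ⁅A₀, ⁅A₀, A₁⁆⁆⁆⁆ + (4*α) • ⁅⁅A₀, ⁅A₀, A₁⁆⁆, ⁅A₀, ⁅A₀, ⁅A₀, A₁⁆⁆⁆⁆ := by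
    rw [s13b, add_lie, smul_lie]
  have s13d : ⁅⁅A₀, A₁⁆, ⁅⁅A₀, ⁅A₀, A₁⁆⁆, ⁅A₀, ⁅A₀, ⁅A₀, A₁⁆⁆⁆⁆⁆ = (-((2/5 : K)*(6*α + β))) • ⁅⁅A₀, A₁⁆, ⁅A₀, ⁅A₀, ⁅A₀, ⁅A₀, A₁⁆⁆⁆⁆⁆ - ⁅⁅A₀, A₁⁆, ⁅⁅A₀, A₁⁆, ⁅A₀, ⁅A₀, ⁅A₀, ⁅A₀, A₁⁆⁆⁆⁆⁆⁆ := by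
    rw [s12, lie_sub, lie_smul]
  have s13 : ⁅⁅A₀, A₁⁆, ⁅⁅A₀, A₁⁆, ⁅A₀, ⁅A₀, ⁅A₀, ⁅A₀, A₁⁆⁆⁆⁆⁆⁆ = (-(((4/5 : K)*(α + β))*((2/5 : K)*(16*α + β)))) • ⁅A₀, ⁅A₀, ⁅A₀, ⁅A₀, A₁⁆⁆⁆⁆ + (-(((4/5 : K)*(α + β))+((2/5 : K)*(16*α + β)))) • ⁅⁅A₀, A₁⁆, ⁅A₀, ⁅A₀, ⁅A₀, ⁅A₀, A₁⁆⁆⁆⁆⁆ := by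
    linear_combination (norm := module) - s13a + leibniz_lie ⁅A₀, ⁅A₀, A₁⁆⁆ ⁅A₀, A₁⁆ ⁅A₀, ⁅A₀, ⁅A₀, A₁⁆⁆⁆ + s13c + s13d
      + s11 + ((2/5 : K)*(16*α + β)) • s12
  have h14 : ⁅A₁, Y⁆ = -⁅A₀, ⁅A₀, ⁅A₀, ⁅A₀, ⁅A₀, A₁⁆⁆⁆⁆⁆ := by linear_combination (norm := module) hR5
  have s15a : ⁅A₁, ⁅A₀, Y⁆⁆ = 0 := by rw [hR6, lie_zero]
  have s15b : ⁅A₀, ⁅A₁, Y⁆⁆ = -⁅A₀, ⁅A₀, ⁅A₀, ⁅A₀, ⁅A₀, ⁅A₀, A₁⁆⁆⁆⁆⁆⁆ := by rw [h14, lie_neg]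
  have s15 : ⁅⁅A₀, A₁⁆, Y⁆ = -⁅A₀, ⁅A₀, ⁅A₀, ⁅A₀, ⁅A₀, ⁅A₀, A₁⁆⁆⁆⁆⁆⁆ := by
    linear_combination (norm := module) s15b - leibniz_lie A₀ A₁ Y - s15a
  have s16a : ⁅A₀, ⁅A₁, ⁅A₀, ⁅A₀, ⁅A₀, ⁅A₀, A₁⁆⁆⁆⁆⁆⁆ = ((4/5 : K)*(α + β)) • ⁅A₀, ⁅A₀, ⁅A₀, ⁅A₀, A₁⁆⁆⁆⁆ := by rw [s6, lie_smul]
  have s16 : ⁅A₁, ⁅A₀, ⁅A₀, ⁅A₀, ⁅A₀, ⁅A₀, A₁⁆⁆⁆⁆⁆⁆ = ((4/5 : K)*(α + β)) • ⁅A₀, ⁅A₀, ⁅A₀, ⁅A₀, A₁⁆⁆⁆⁆ - ⁅⁅A₀, A₁⁆, ⁅A₀, ⁅A₀, ⁅A₀, ⁅A₀, A₁⁆⁆⁆⁆⁆ := by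
    linear_combination (norm := module) s16a - leibniz_lie A₀ A₁ ⁅A₀, ⁅A₀, ⁅A₀, ⁅A₀, A₁⁆⁆⁆⁆
  have s17a : ⁅A₀, ⁅⁅A₁, ⁅A₀, A₁⁆⁆, ⁅A₀, ⁅A₀, ⁅A₀, A₁⁆⁆⁆⁆⁆ = ((-(4*α))*((2/5 : K)*(β - 4*α))) • ⁅A₀, ⁅A₀, ⁅A₀, A₁⁆⁆⁆ := by rw [s9, lie_smul, s4, smul_smul]
  have s17b : ⁅⁅A₀, ⁅A₁, ⁅A₀, A₁⁆⁆⁆, ⁅A₀, ⁅A₀, ⁅A₀, A₁⁆⁆⁆⁆ = (-(4*α)) • ⁅⁅A₀, A₁⁆, ⁅A₀, ⁅A₀, ⁅A₀, A₁⁆⁆⁆⁆ := by rw [s17c, smul_lie]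
  have s17 : ⁅⁅A₁, ⁅A₀, A₁⁆⁆, ⁅A₀, ⁅A₀, ⁅A₀, ⁅A₀, A₁⁆⁆⁆⁆⁆ = (-(4*α*((4/5 : K)*(α + β)))) • ⁅A₀, ⁅A₀, ⁅A₀, A₁⁆⁆⁆ := by
    linear_combination (norm := module) - leibniz_lie A₀ ⁅A₁, ⁅A₀, A₁⁆⁆ ⁅A₀, ⁅A₀, ⁅A₀, A₁⁆⁆⁆ + s17a - s17b + (4*α) • s5
  have s18a : ⁅A₀, ⁅⁅A₁, ⁅A₀, A₁⁆⁆, ⁅A₀, ⁅A₀, ⁅A₀, ⁅A₀, A₁⁆⁆⁆⁆⁆⁆ = (-(4*α*((4/5 : K)*(α + β)))) • ⁅A₀, ⁅A₀, ⁅A₀, ⁅A₀, A₁⁆⁆⁆⁆ := by rw [s17, lie_smul]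
  have s18b : ⁅⁅A₀, ⁅A₁, ⁅A₀, A₁⁆⁆⁆, ⁅A₀, ⁅A₀, ⁅A₀, ⁅A₀, A₁⁆⁆⁆⁆⁆ = (-(4*α)) • ⁅⁅A₀, A₁⁆, ⁅A₀, ⁅A₀, ⁅A₀, ⁅A₀, A₁⁆⁆⁆⁆⁆ := by rw [s17c, smul_lie]
  have s18 : ⁅⁅A₁, ⁅A₀, A₁⁆⁆, ⁅A₀, ⁅A₀, ⁅A₀, ⁅A₀, ⁅A₀, A₁⁆⁆⁆⁆⁆⁆ = (4*α) • ⁅⁅A₀, A₁⁆, ⁅A₀, ⁅A₀, ⁅A₀, ⁅A₀, A₁⁆⁆⁆⁆⁆ - (4*α*((4/5 : K)*(α + β))) • ⁅A₀, ⁅A₀, ⁅A₀, ⁅A₀, A₁⁆⁆⁆⁆ := by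
    linear_combination (norm := module) - leibniz_lie A₀ ⁅A₁, ⁅A₀, A₁⁆⁆ ⁅A₀, ⁅A₀, ⁅A₀, ⁅A₀, A₁⁆⁆⁆⁆ + s18a - s18b
  have s19b : ⁅⁅A₀, A₁⁆, ⁅A₁, Y⁆⁆ = -⁅⁅A₀, A₁⁆, ⁅A₀, ⁅A₀, ⁅A₀, ⁅A₀, ⁅A₀, A₁⁆⁆⁆⁆⁆⁆ := by rw [h14, lie_neg]
  have s19c : ⁅A₁, ⁅⁅A₀, A₁⁆, Y⁆⁆ = -⁅A₁, ⁅A₀, ⁅A₀, ⁅A₀, ⁅A₀, ⁅A₀, ⁅A₀, A₁⁆⁆⁆⁆⁆⁆⁆ := by rw [s15, lie_neg]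
  have s19d : ⁅A₀, ⁅A₁, ⁅A₀, ⁅A₀, ⁅A₀, ⁅A₀, ⁅A₀, A₁⁆⁆⁆⁆⁆⁆⁆ = ((4/5 : K)*(α + β)) • ⁅A₀, ⁅A₀, ⁅A₀, ⁅A₀, ⁅A₀, A₁⁆⁆⁆⁆⁆ - ⁅A₀, ⁅⁅A₀, A₁⁆, ⁅A₀, ⁅A₀, ⁅A₀, ⁅A₀, A₁⁆⁆⁆⁆⁆⁆ := by rw [s16, lie_sub, lie_smul]
  have s19 : ⁅⁅A₁, ⁅A₀, A₁⁆⁆, Y⁆ = (3 : K) • ⁅⁅A₀, A₁⁆, ⁅A₀, ⁅A₀, ⁅A₀, ⁅A₀, ⁅A₀, A₁⁆⁆⁆⁆⁆⁆ + (-((4/5 : K)*(α + β))) • ⁅A₀, ⁅A₀, ⁅A₀, ⁅A₀, ⁅A₀, A₁⁆⁆⁆⁆⁆ + ⁅⁅A₀, ⁅A₀, A₁⁆⁆, ⁅A₀, ⁅A₀, ⁅A₀, ⁅A₀, A₁⁆⁆⁆⁆⁆ := by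
    linear_combination (norm := module) - leibniz_lie A₁ ⁅A₀, A₁⁆ Y + s19c - s19b
      + leibniz_lie A₀ A₁ ⁅A₀, ⁅A₀, ⁅A₀, ⁅A₀, ⁅A₀, A₁⁆⁆⁆⁆⁆ - s19d + leibniz_lie A₀ ⁅A₀, A₁⁆ ⁅A₀, ⁅A₀, ⁅A₀, ⁅A₀, A₁⁆⁆⁆⁆
  have s21a : ⁅⁅A₁, ⁅A₁, ⁅A₀, A₁⁆⁆⁆, Y⁆ = 0 := by rw [hR1, zero_lie]
  have s21b : ⁅⁅A₁, ⁅A₀, A₁⁆⁆, ⁅A₁, Y⁆⁆ = -⁅⁅A₁, ⁅A₀, A₁⁆⁆, ⁅A₀, ⁅A₀, ⁅A₀, ⁅A₀, ⁅A₀, A₁⁆⁆⁆⁆⁆⁆ := by rw [h14, lie_neg]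
  have s21c : ⁅A₁, ⁅⁅A₁, ⁅A₀, A₁⁆⁆, Y⁆⁆ = (3 : K) • ⁅A₁, ⁅⁅A₀, A₁⁆, ⁅A₀, ⁅A₀, ⁅A₀, ⁅A₀, ⁅A₀, A₁⁆⁆⁆⁆⁆⁆⁆ + (-((4/5 : K)*(α + β))) • ⁅A₁, ⁅A₀, ⁅A₀, ⁅A₀, ⁅A₀, ⁅A₀, A₁⁆⁆⁆⁆⁆⁆
      + ⁅A₁, ⁅⁅A₀, ⁅A₀, A₁⁆⁆, ⁅A₀, ⁅A₀, ⁅A₀, ⁅A₀, A₁⁆⁆⁆⁆⁆⁆ := by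
    rw [s19, lie_add, lie_add, lie_smul, lie_smul]
  have s21d : ⁅⁅A₀, A₁⁆, ⁅A₁, ⁅A₀, ⁅A₀, ⁅A₀, ⁅A₀, ⁅A₀, A₁⁆⁆⁆⁆⁆⁆⁆ = ((4/5 : K)*(α + β)) • ⁅⁅A₀, A₁⁆, ⁅A₀, ⁅A₀, ⁅A₀, ⁅A₀, A₁⁆⁆⁆⁆⁆ - ⁅⁅A₀, A₁⁆, ⁅⁅A₀, A₁⁆, ⁅A₀, ⁅A₀, ⁅A₀, ⁅A₀, A₁⁆⁆⁆⁆⁆⁆ := by rw [s16, lie_sub, lie_smul]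
  have s21e : ⁅⁅A₁, ⁅A₀, ⁅A₀, A₁⁆⁆⁆, ⁅A₀, ⁅A₀, ⁅A₀, ⁅A₀, A₁⁆⁆⁆⁆⁆ = (-(4*α)) • ⁅⁅A₀, A₁⁆, ⁅A₀, ⁅A₀, ⁅A₀, ⁅A₀, A₁⁆⁆⁆⁆⁆ := by rw [s1, smul_lie]
  have s21f : ⁅⁅A₀, ⁅A₀, A₁⁆⁆, ⁅A₁, ⁅A₀, ⁅A₀, ⁅A₀, ⁅A₀, A₁⁆⁆⁆⁆⁆⁆ = ((4/5 : K)*(α + β)) • ⁅⁅A₀, ⁅A₀, A₁⁆⁆, ⁅A₀, ⁅A₀, ⁅A₀, A₁⁆⁆⁆⁆ := by rw [s6, lie_smul]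
  have sM : ⁅⁅A₀, A₁⁆, ⁅⁅A₀, A₁⁆, ⁅A₀, ⁅A₀, ⁅A₀, ⁅A₀, A₁⁆⁆⁆⁆⁆⁆ = (((4/5 : K)*(α + β))+4*α) • ⁅⁅A₀, A₁⁆, ⁅A₀, ⁅A₀, ⁅A₀, ⁅A₀, A₁⁆⁆⁆⁆⁆ + (-(((4/5 : K)*(α + β))*((2/5 : K)*(16*α + β)))) • ⁅A₀, ⁅A₀, ⁅A₀, ⁅A₀, A₁⁆⁆⁆⁆ := by
    linear_combination (norm := module) ((1/3 : K)) • ( - leibniz_lie A₁ ⁅A₁, ⁅A₀, A₁⁆⁆ Y - s21a - s21b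
      + s21c + (3 : K) • (leibniz_lie A₁ ⁅A₀, A₁⁆ ⁅A₀, ⁅A₀, ⁅A₀, ⁅A₀, ⁅A₀, A₁⁆⁆⁆⁆⁆) + (3 : K) • s21d + leibniz_lie A₁ ⁅A₀, ⁅A₀, A₁⁆⁆ ⁅A₀, ⁅A₀, ⁅A₀, ⁅A₀, A₁⁆⁆⁆⁆
      + s21e + s21f - ((4/5 : K)*(α + β)) • s16 + (4 : K) • s18 + ((4/5 : K)*(α + β)) • s12 )
  have hw : ⁅⁅A₀, A₁⁆, ⁅A₀, ⁅A₀, ⁅A₀, ⁅A₀, A₁⁆⁆⁆⁆⁆ = 0 := by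
    have h2 : ((2 : K)*(6*α + β)) • ⁅⁅A₀, A₁⁆, ⁅A₀, ⁅A₀, ⁅A₀, ⁅A₀, A₁⁆⁆⁆⁆⁆ = 0 := by
      linear_combination (norm := module) s13 - sM
    exact (smul_eq_zero.mp h2).resolve_left (mul_ne_zero two_ne_zero h6)
  have hF : ⁅A₀, ⁅A₀, ⁅A₀, ⁅A₀, A₁⁆⁆⁆⁆ = 0 := by
    have h1 : (((4/5 : K)*(α + β))*((2/5 : K)*(16*α + β))) • ⁅A₀, ⁅A₀, ⁅A₀, ⁅A₀, A₁⁆⁆⁆⁆ = 0 := by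
      have h3 := s13
      rw [hw, lie_zero] at h3
      linear_combination (norm := module) h3
    have hnz : (((4/5 : K)*(α + β))*((2/5 : K)*(16*α + β))) ≠ 0 :=
      mul_ne_zero (mul_ne_zero (by norm_num) hαβ) (mul_ne_zero (by norm_num) h16)
    exact (smul_eq_zero.mp h1).resolve_left hnz
  have hE : ⁅A₀, ⁅A₀, ⁅A₀, A₁⁆⁆⁆ = 0 := by
    have h1 : ((4/5 : K)*(α + β)) • ⁅A₀, ⁅A₀, ⁅A₀, A₁⁆⁆⁆ = 0 := by rw [← s6, hF, lie_zero]
    exact (smul_eq_zero.mp h1).resolve_left (mul_ne_zero (by norm_num) hαβ)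
  have hu : ⁅A₁, ⁅A₀, ⁅A₀, ⁅A₀, A₁⁆⁆⁆⁆ = 0 := by rw [hE, lie_zero]
  have hG : ⁅A₀, ⁅A₀, ⁅A₀, ⁅A₀, ⁅A₀, A₁⁆⁆⁆⁆⁆ = 0 := by rw [hF, lie_zero]
  have hH : ⁅A₀, ⁅A₀, ⁅A₀, ⁅A₀, ⁅A₀, ⁅A₀, A₁⁆⁆⁆⁆⁆⁆ = 0 := by rw [hG, lie_zero]
  have hA1Y : ⁅A₁, Y⁆ = 0 := by rw [h14, hG, neg_zero]
  have hBY : ⁅⁅A₀, A₁⁆, Y⁆ = 0 := by rw [s15, hH, neg_zero]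
  have hBaY : ⁅⁅A₀, A₁⁆, ⁅A₀, Y⁆⁆ = 0 := by rw [hR6, lie_zero]
  have haBY : ⁅A₀, ⁅⁅A₀, A₁⁆, Y⁆⁆ = 0 := by rw [hBY, lie_zero]
  have hCY : ⁅⁅A₀, ⁅A₀, A₁⁆⁆, Y⁆ = 0 := by
    linear_combination (norm := module) haBY - leibniz_lie A₀ ⁅A₀, A₁⁆ Y - hBaY
  have hBG : ⁅⁅A₀, A₁⁆, ⁅A₀, ⁅A₀, ⁅A₀, ⁅A₀, ⁅A₀, A₁⁆⁆⁆⁆⁆⁆ = 0 := by rw [hG, lie_zero]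
  have hCF : ⁅⁅A₀, ⁅A₀, A₁⁆⁆, ⁅A₀, ⁅A₀, ⁅A₀, ⁅A₀, A₁⁆⁆⁆⁆⁆ = 0 := by rw [hF, lie_zero]
  have hDY : ⁅⁅A₁, ⁅A₀, A₁⁆⁆, Y⁆ = 0 := by
    linear_combination (norm := module) s19 + (3 : K) • hBG - ((4/5 : K)*(α + β)) • hG + hCF
  have hBC : ⁅⁅A₀, A₁⁆, ⁅A₀, ⁅A₀, A₁⁆⁆⁆ = (-(4*α)) • ⁅A₀, ⁅A₀, A₁⁆⁆ := by
    linear_combination (norm := module) s2 - hu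
  have hbD : ⁅A₀, ⁅A₁, ⁅A₁, ⁅A₀, A₁⁆⁆⁆⁆ = 0 := by rw [hR1, lie_zero]
  have haD : ⁅A₁, ⁅A₀, ⁅A₁, ⁅A₀, A₁⁆⁆⁆⁆ = (-(4*α)) • ⁅A₁, ⁅A₀, A₁⁆⁆ := by rw [s17c, lie_smul]
  have hBD : ⁅⁅A₀, A₁⁆, ⁅A₁, ⁅A₀, A₁⁆⁆⁆ = (4*α) • ⁅A₁, ⁅A₀, A₁⁆⁆ := by
    linear_combination (norm := module) hbD - leibniz_lie A₀ A₁ ⁅A₁, ⁅A₀, A₁⁆⁆ - haD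
  have hz1 : ⁅A₀, ⁅⁅A₀, A₁⁆, ⁅A₁, ⁅A₀, A₁⁆⁆⁆⁆ = ((4*α)*(-(4*α))) • ⁅A₀, A₁⁆ := by
    rw [hBD, lie_smul, s17c, smul_smul]
  have hz2 : ⁅⁅A₀, A₁⁆, ⁅A₀, ⁅A₁, ⁅A₀, A₁⁆⁆⁆⁆ = 0 := by rw [s17c, lie_smul, lie_self, smul_zero]
  have hCD : ⁅⁅A₀, ⁅A₀, A₁⁆⁆, ⁅A₁, ⁅A₀, A₁⁆⁆⁆ = (-(16*α^2)) • ⁅A₀, A₁⁆ := by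
    linear_combination (norm := module) hz1 - leibniz_lie A₀ ⁅A₀, A₁⁆ ⁅A₁, ⁅A₀, A₁⁆⁆ - hz2
  set S : Submodule K 𝔤 :=
    Submodule.span K {A₀, A₁, Y, ⁅A₀, A₁⁆, ⁅A₀, ⁅A₀, A₁⁆⁆, ⁅A₁, ⁅A₀, A₁⁆⁆} with hS
  have hA0S : A₀ ∈ S := Submodule.subset_span (by simp)
  have hA1S : A₁ ∈ S := Submodule.subset_span (by simp)
  have hYS : Y ∈ S := Submodule.subset_span (by simp)
  have hBS : ⁅A₀, A₁⁆ ∈ S := Submodule.subset_span (by simp)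
  have hCS : ⁅A₀, ⁅A₀, A₁⁆⁆ ∈ S := Submodule.subset_span (by simp)
  have hDS : ⁅A₁, ⁅A₀, A₁⁆⁆ ∈ S := Submodule.subset_span (by simp)
  have hclosed : ∀ x ∈ S, ∀ y ∈ S, ⁅x, y⁆ ∈ S := by
    intro x hx y hy
    induction hx, hy using Submodule.span_induction₂ with
    | mem_mem x y hx hy =>
      simp only [Set.mem_insert_iff, Set.mem_singleton_iff] at hx hy
      rcases hx with rfl | rfl | rfl | rfl | rfl | rfl <;>
        rcases hy with rfl | rfl | rfl | rfl | rfl | rfl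
      · rw [lie_self]; exact S.zero_mem
      · exact hBS
      · rw [hR6]; exact S.zero_mem
      · exact hCS
      · rw [hE]; exact S.zero_mem
      · rw [s17c]; exact S.smul_mem _ hBS
      · rw [← lie_skew]; exact S.neg_mem hBS
      · rw [lie_self]; exact S.zero_mem
      · rw [hA1Y]; exact S.zero_mem
      · exact hDS
      · rw [s1]; exact S.smul_mem _ hBS
      · rw [hR1]; exact S.zero_mem
      · rw [← lie_skew, hR6, neg_zero]; exact S.zero_mem
      · rw [← lie_skew, hA1Y, neg_zero]; exact S.zero_mem
      · rw [lie_self]; exact S.zero_mem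
      · rw [← lie_skew, hBY, neg_zero]; exact S.zero_mem
      · rw [← lie_skew, hCY, neg_zero]; exact S.zero_mem
      · rw [← lie_skew, hDY, neg_zero]; exact S.zero_mem
      · rw [← lie_skew]; exact S.neg_mem hCS
      · rw [← lie_skew]; exact S.neg_mem hDS
      · rw [hBY]; exact S.zero_mem
      · rw [lie_self]; exact S.zero_mem
      · rw [hBC]; exact S.smul_mem _ hCS
      · rw [hBD]; exact S.smul_mem _ hDS
      · rw [← lie_skew, hE, neg_zero]; exact S.zero_mem
      · rw [← lie_skew, s1]; exact S.neg_mem (S.smul_mem _ hBS)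
      · rw [hCY]; exact S.zero_mem
      · rw [← lie_skew, hBC]; exact S.neg_mem (S.smul_mem _ hCS)
      · rw [lie_self]; exact S.zero_mem
      · rw [hCD]; exact S.smul_mem _ hBS
      · rw [← lie_skew, s17c]; exact S.neg_mem (S.smul_mem _ hBS)
      · rw [← lie_skew, hR1, neg_zero]; exact S.zero_mem
      · rw [hDY]; exact S.zero_mem
      · rw [← lie_skew, hBD]; exact S.neg_mem (S.smul_mem _ hDS)
      · rw [← lie_skew, hCD]; exact S.neg_mem (S.smul_mem _ hBS)
      · rw [lie_self]; exact S.zero_mem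
    | zero_left y hy => rw [zero_lie]; exact S.zero_mem
    | zero_right x hx => rw [lie_zero]; exact S.zero_mem
    | add_left x y z hx hy hz h1 h2 => rw [add_lie]; exact S.add_mem h1 h2
    | add_right x y z hx hy hz h1 h2 => rw [lie_add]; exact S.add_mem h1 h2
    | smul_left r x y hx hy h1 => rw [smul_lie]; exact S.smul_mem r h1
    | smul_right r x y hx hy h1 => rw [lie_smul]; exact S.smul_mem r h1
  let T : LieSubalgebra K 𝔤 := { S with lie_mem' := fun {x y} hx hy => hclosed x hx y hy }
  have hle : LieSubalgebra.lieSpan K 𝔤 {A₀, A₁, Y} ≤ T := by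
    rw [LieSubalgebra.lieSpan_le]
    intro z hz
    simp only [Set.mem_insert_iff, Set.mem_singleton_iff] at hz
    rcases hz with rfl | rfl | rfl
    · exact hA0S
    · exact hA1S
    · exact hYS
  have hA0L : A₀ ∈ LieSubalgebra.lieSpan K 𝔤 {A₀, A₁, Y} :=
    LieSubalgebra.subset_lieSpan (by simp)
  have hA1L : A₁ ∈ LieSubalgebra.lieSpan K 𝔤 {A₀, A₁, Y} :=
    LieSubalgebra.subset_lieSpan (by simp)
  have hYL : Y ∈ LieSubalgebra.lieSpan K 𝔤 {A₀, A₁, Y} :=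
    LieSubalgebra.subset_lieSpan (by simp)
  have hge : S ≤ (LieSubalgebra.lieSpan K 𝔤 {A₀, A₁, Y}).toSubmodule := by
    rw [hS, Submodule.span_le]
    intro z hz
    simp only [Set.mem_insert_iff, Set.mem_singleton_iff] at hz
    rcases hz with rfl | rfl | rfl | rfl | rfl | rfl
    · exact hA0L
    · exact hA1L
    · exact hYL
    · exact LieSubalgebra.lie_mem _ hA0L hA1L
    · exact LieSubalgebra.lie_mem _ hA0L (LieSubalgebra.lie_mem _ hA0L hA1L)
    · exact LieSubalgebra.lie_mem _ hA1L (LieSubalgebra.lie_mem _ hA0L hA1L)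
  have heq : (LieSubalgebra.lieSpan K 𝔤 {A₀, A₁, Y}).toSubmodule = S :=
    le_antisymm (fun x hx => hle hx) hge
  refine ⟨heq, ?_⟩
  have hrank : Module.rank K (LieSubalgebra.lieSpan K 𝔤 {A₀, A₁, Y})
      = Module.rank K ((LieSubalgebra.lieSpan K 𝔤 {A₀, A₁, Y}).toSubmodule) := rfl
  rw [hrank, heq, hS]
  refine (rank_span_le _).trans ?_
  refine le_trans Cardinal.mk_insert_le ?_
  refine le_trans (add_le_add Cardinal.mk_insert_le (le_refl 1)) ?_
  refine le_trans (add_le_add (add_le_add Cardinal.mk_insert_le (le_refl 1)) (le_refl 1)) ?_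
  refine le_trans (add_le_add (add_le_add (add_le_add
    Cardinal.mk_insert_le (le_refl 1)) (le_refl 1)) (le_refl 1)) ?_
  refine le_trans (add_le_add (add_le_add (add_le_add (add_le_add
    Cardinal.mk_insert_le (le_refl 1)) (le_refl 1)) (le_refl 1)) (le_refl 1)) ?_
  rw [Cardinal.mk_singleton]
  norm_num
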